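/- Let r ≥ 1 and let b : ℝ^r → ℝ^r be continuously differentiable with M := sup_x ‖Db(x)‖ < ∞ (operator norm of the Jacobian) and satisfying the log-norm condition: there is λ_b > 0 such that ⟨v, Db(x) v⟩ ≤ −λ_b ‖v‖^2 for all x, v ∈ ℝ^r. Let Σ be an r × r real matrix and let W, W̄ : [0,∞) → ℝ^r be continuous paths with W_0 = W̄_0 = 0. Suppose X, X̄ : [0,∞) × ℝ^r → ℝ^r are continuous in time and satisfy, for all t ≥ 0 and x ∈ ℝ^r, X_t(x) = x + ∫_0^t b(X_s(x)) ds + Σ W_t and X̄_t(x) = x + ∫_0^t b(X̄_s(x)) ds + Σ W̄_t. Then there exist constants c > 0 and λ > 0, depending only on λ_b, M and ‖Σ‖, such that for every t ≥ 0, sup_{x ∈ ℝ^r} ‖X_t(x) − X̄_t(x)‖ ≤ c ( ‖W_t − W̄_t‖ + ( ∫_0^t e^{−2λ(t−s)} ‖W_s − W̄_s‖^2 ds )^{1/2} ). -/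

import Mathlib

open scoped RealInnerProductSpace

lemma alg_lem {lamb M I a s z : ℝ} (hl : 0 < lamb) (hM : 0 ≤ M)
    (ha : 0 ≤ a) (hs : 0 ≤ s) (hz : 0 ≤ z)
    (hI : I ≤ -lamb * a^2 + M * s * a) (hza : z ≤ a + s) :
    I ≤ -(lamb/4) * z^2 + (lamb + M + M^2/lamb) * s^2 := by
  have h1 : M * lamb * (a*s) ≤ lamb^2/4 * a^2 + M^2 * s^2 := by nlinarith [sq_nonneg (lamb*a - 2*M*s)]
  have h2 : M^2/lamb * lamb = M^2 := by field_simp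
  have h3 : z^2 ≤ (a+s)^2 := by nlinarith
  have key : lamb * (-lamb*a^2 + M*s*a) ≤ lamb * (-(lamb/4)*z^2 + (lamb+M+M^2/lamb)*s^2) := by
    nlinarith [h1, h3, mul_nonneg ha hs, sq_nonneg (a-s), sq_nonneg s, sq_nonneg a, mul_nonneg hM (mul_nonneg hs hs)]
  have := le_of_mul_le_mul_left key hl
  linarith

lemma osl {n : ℕ} {lamb : ℝ}
    (b : EuclideanSpace ℝ (Fin n) → EuclideanSpace ℝ (Fin n)) (hb : ContDiff ℝ 1 b)
    (hlog : ∀ x v, ⟪v, fderiv ℝ b x v⟫ ≤ -lamb * ‖v‖^2) (u v : EuclideanSpace ℝ (Fin n)) :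
    ⟪u - v, b u - b v⟫ ≤ -lamb * ‖u - v‖^2 := by
  set w := u - v with hw
  have hbd : Differentiable ℝ b := hb.differentiable one_ne_zero
  set g : ℝ → ℝ := fun θ => ⟪w, b (v + θ • w)⟫ + lamb * ‖w‖^2 * θ with hg
  have hgd : ∀ θ : ℝ, HasDerivAt g (⟪w, fderiv ℝ b (v + θ • w) w⟫ + lamb * ‖w‖^2) θ := by
    intro θ
    have h1 : HasDerivAt (fun θ : ℝ => v + θ • w) w θ := by
      simpa using ((hasDerivAt_id θ).smul_const w).const_add v
    have h2 : HasDerivAt (fun θ : ℝ => b (v + θ • w)) (fderiv ℝ b (v + θ • w) w) θ :=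
      (hbd (v + θ • w)).hasFDerivAt.comp_hasDerivAt θ h1
    have h3 : HasDerivAt (fun θ : ℝ => ⟪w, b (v + θ • w)⟫)
        (⟪w, fderiv ℝ b (v + θ • w) w⟫) θ := by
      simpa using (hasDerivAt_const θ w).inner ℝ h2
    exact (h3.add ((hasDerivAt_id θ).const_mul (lamb * ‖w‖^2))).congr_deriv (by simp)
  have hanti : Antitone g := by
    apply antitone_of_deriv_nonpos (fun θ => (hgd θ).differentiableAt)
    intro θ
    rw [(hgd θ).deriv]
    have := hlog (v + θ • w) w
    linarith
  have h10 : g 1 ≤ g 0 := hanti zero_le_one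
  have e1 : v + (1:ℝ) • w = u := by rw [one_smul, hw]; abel
  have e0 : v + (0:ℝ) • w = v := by simp
  simp only [hg, e1, e0, mul_one, mul_zero, add_zero] at h10
  rw [inner_sub_right]
  linarith

set_option maxHeartbeats 1000000 in
/-- Time-uniform pathwise Wong–Zakai estimate for a homogeneous diffusion matrix: under
the log-norm condition on the `C¹` drift `b` (with bounded Jacobian), there exist `c, λ > 0`
(independent of the driving paths) such that the flows `X, X̄` of `dY = b(Y)dt + Σ dW`
driven by continuous paths `W, W̄` satisfy, for all `t ≥ 0`,
`sup_x ‖X_t(x) − X̄_t(x)‖ ≤ c(‖W_t − W̄_t‖ + (∫_0^t e^{−2λ(t−s)}‖W_s − W̄_s‖² ds)^{1/2})`. -/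
theorem stmt_5 {r : ℕ} (hr : 1 ≤ r) (lamb : ℝ) (hlamb : 0 < lamb)
    (b : EuclideanSpace ℝ (Fin r) → EuclideanSpace ℝ (Fin r)) (hb : ContDiff ℝ 1 b)
    (M : ℝ) (hM : ∀ x, ‖fderiv ℝ b x‖ ≤ M)
    (hlog : ∀ x v, ⟪v, fderiv ℝ b x v⟫ ≤ -lamb * ‖v‖^2)
    (Sig : EuclideanSpace ℝ (Fin r) →L[ℝ] EuclideanSpace ℝ (Fin r)) :
    ∃ c > (0:ℝ), ∃ lam > (0:ℝ),
      ∀ (W Wbar : ℝ → EuclideanSpace ℝ (Fin r)),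
        Continuous W → Continuous Wbar → W 0 = 0 → Wbar 0 = 0 →
      ∀ (X Xbar : ℝ → EuclideanSpace ℝ (Fin r) → EuclideanSpace ℝ (Fin r)),
        (∀ x, Continuous fun t => X t x) → (∀ x, Continuous fun t => Xbar t x) →
        (∀ x, ∀ t ≥ (0:ℝ), X t x = x + (∫ s in (0:ℝ)..t, b (X s x)) + Sig (W t)) →
        (∀ x, ∀ t ≥ (0:ℝ), Xbar t x = x + (∫ s in (0:ℝ)..t, b (Xbar s x)) + Sig (Wbar t)) →
        ∀ t ≥ (0:ℝ), ∀ x,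
          ‖X t x - Xbar t x‖
            ≤ c * (‖W t - Wbar t‖
                + Real.sqrt (∫ s in (0:ℝ)..t, Real.exp (-(2*lam*(t-s))) * ‖W s - Wbar s‖^2)) := by
  have hM0 : 0 ≤ M := le_trans (norm_nonneg _) (hM 0)
  have hbd : Differentiable ℝ b := hb.differentiable one_ne_zero
  have hlip : ∀ u v : EuclideanSpace ℝ (Fin r), ‖b u - b v‖ ≤ M * ‖u - v‖ := fun u v =>
    Convex.norm_image_sub_le_of_norm_fderiv_le (fun x _ => hbd x) (fun x _ => hM x)
      convex_univ (Set.mem_univ v) (Set.mem_univ u)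
  set K : ℝ := lamb + M + M^2/lamb with hKdef
  have hKpos : 0 < K := by
    have : 0 ≤ M^2/lamb := by positivity
    simp only [hKdef]; linarith
  refine ⟨‖Sig‖ + Real.sqrt (2*K) * ‖Sig‖ + 1, by positivity, lamb/4, by positivity, ?_⟩
  intro W Wbar hWc hWbc hW0 hWb0 X Xbar hXc hXbc hX hXb t ht x
  have hΔc : Continuous fun s => W s - Wbar s := hWc.sub hWbc
  set Z : ℝ → EuclideanSpace ℝ (Fin r) := fun s => X s x - Xbar s x - Sig (W s - Wbar s)
    with hZdef
  set g : ℝ → EuclideanSpace ℝ (Fin r) := fun s => b (X s x) - b (Xbar s x) with hgdef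
  have hgc : Continuous g := (hb.continuous.comp (hXc x)).sub (hb.continuous.comp (hXbc x))
  have hZrep : ∀ s : ℝ, 0 ≤ s → Z s = ∫ u in (0:ℝ)..s, g u := by
    intro s hs
    have hint : (∫ u in (0:ℝ)..s, g u)
        = (∫ u in (0:ℝ)..s, b (X u x)) - ∫ u in (0:ℝ)..s, b (Xbar u x) :=
      intervalIntegral.integral_sub
        ((hb.continuous.comp (hXc x)).intervalIntegrable 0 s)
        ((hb.continuous.comp (hXbc x)).intervalIntegrable 0 s)
    rw [hint, hZdef]
    simp only [hX x s hs, hXb x s hs, map_sub]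
    abel
  have hZc : Continuous Z := ((hXc x).sub (hXbc x)).sub (Sig.continuous.comp hΔc)
  have hZ0 : Z 0 = 0 := by rw [hZrep 0 le_rfl]; simp
  have hprim : ∀ s : ℝ, HasDerivAt (fun u => ∫ v in (0:ℝ)..u, g v) (g s) s := fun s =>
    intervalIntegral.integral_hasDerivAt_right (hgc.intervalIntegrable 0 s)
      (hgc.stronglyMeasurableAtFilter _ _) hgc.continuousAt
  have hZd : ∀ s ∈ Set.Ioi (0:ℝ), HasDerivAt Z (g s) s := by
    intro s hs
    refine (hprim s).congr_of_eventuallyEq ?_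
    filter_upwards [Ioi_mem_nhds hs] with u hu using hZrep u (le_of_lt hu)
  set φ : ℝ → ℝ := fun s => ‖Z s‖^2 with hφdef
  have hφc : Continuous φ := (hZc.norm).pow 2
  have hφd : ∀ s ∈ Set.Ioi (0:ℝ), HasDerivAt φ (2 * ⟪Z s, g s⟫) s := by
    intro s hs
    have h := (hZd s hs).inner ℝ (hZd s hs)
    have heq : φ = fun u => ⟪Z u, Z u⟫ := funext fun u => (real_inner_self_eq_norm_sq (Z u)).symm
    rw [heq]
    refine h.congr_deriv ?_
    rw [real_inner_comm (g s) (Z s)]; ring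
  set q : ℝ → ℝ := fun s => ‖Sig (W s - Wbar s)‖^2 with hqdef
  have hqc : Continuous q := ((Sig.continuous.comp hΔc).norm).pow 2
  have key : ∀ s ∈ Set.Ioi (0:ℝ), 2 * ⟪Z s, g s⟫ ≤ -(lamb/2) * φ s + 2*K*q s := by
    intro s _
    have hD : ⟪X s x - Xbar s x, g s⟫ ≤ -lamb * ‖X s x - Xbar s x‖^2 :=
      osl b hb hlog (X s x) (Xbar s x)
    have hS : -⟪Sig (W s - Wbar s), g s⟫ ≤ ‖Sig (W s - Wbar s)‖ * ‖g s‖ := by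
      have := abs_real_inner_le_norm (Sig (W s - Wbar s)) (g s)
      cases abs_le.mp this with
      | intro h1 h2 => linarith
    have hgn : ‖g s‖ ≤ M * ‖X s x - Xbar s x‖ := hlip _ _
    have hZsplit : ⟪Z s, g s⟫
        = ⟪X s x - Xbar s x, g s⟫ - ⟪Sig (W s - Wbar s), g s⟫ := by
      rw [hZdef]; simp [inner_sub_left]
    have hI : ⟪Z s, g s⟫ ≤ -lamb * ‖X s x - Xbar s x‖^2
        + M * ‖Sig (W s - Wbar s)‖ * ‖X s x - Xbar s x‖ := by
      have h2 : -⟪Sig (W s - Wbar s), g s⟫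
          ≤ ‖Sig (W s - Wbar s)‖ * (M * ‖X s x - Xbar s x‖) := by
        refine le_trans hS ?_
        exact mul_le_mul_of_nonneg_left hgn (norm_nonneg _)
      rw [hZsplit]; nlinarith [hD]
    have hza : ‖Z s‖ ≤ ‖X s x - Xbar s x‖ + ‖Sig (W s - Wbar s)‖ := by
      rw [hZdef]; exact norm_sub_le _ _
    have := alg_lem hlamb hM0 (norm_nonneg (X s x - Xbar s x))
      (norm_nonneg (Sig (W s - Wbar s))) (norm_nonneg (Z s)) hI hza
    simp only [hφdef, hqdef, hKdef]
    linarith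
  -- primitive of forcing
  set P : ℝ → ℝ := fun s => ∫ u in (0:ℝ)..s, Real.exp (lamb/2*u) * q u with hPdef
  have hfc : Continuous fun u => Real.exp (lamb/2*u) * q u :=
    (Real.continuous_exp.comp (continuous_const.mul continuous_id)).mul hqc
  have hPd : ∀ s : ℝ, HasDerivAt P (Real.exp (lamb/2*s) * q s) s := fun s =>
    intervalIntegral.integral_hasDerivAt_right (hfc.intervalIntegrable 0 s)
      (hfc.stronglyMeasurableAtFilter _ _) hfc.continuousAt
  set F : ℝ → ℝ := fun s => Real.exp (lamb/2*s) * φ s - 2*K * P s with hFdef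
  have hec : ∀ s : ℝ, HasDerivAt (fun u : ℝ => Real.exp (lamb/2*u))
      (Real.exp (lamb/2*s) * (lamb/2)) s := by
    intro s
    have h1 : HasDerivAt (fun u : ℝ => lamb/2*u) (lamb/2) s := by
      simpa using (hasDerivAt_id s).const_mul (lamb/2)
    exact (Real.hasDerivAt_exp (lamb/2*s)).comp s h1
  have hFd : ∀ s ∈ Set.Ioi (0:ℝ), HasDerivAt F
      (Real.exp (lamb/2*s) * (lamb/2 * φ s + 2 * ⟪Z s, g s⟫ - 2*K*q s)) s := by
    intro s hs
    have h1 := ((hec s).mul (hφd s hs)).sub ((hPd s).const_mul (2*K))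
    refine h1.congr_deriv ?_
    ring
  have hFc : Continuous F := by
    refine ((Real.continuous_exp.comp (continuous_const.mul continuous_id)).mul hφc).sub
      (continuous_const.mul ?_)
    have hPdiff : Differentiable ℝ P := fun s => (hPd s).differentiableAt
    exact hPdiff.continuous
  have hanti : AntitoneOn F (Set.Ici (0:ℝ)) := by
    refine antitoneOn_of_deriv_nonpos (convex_Ici 0) hFc.continuousOn ?_ ?_
    · intro s hs
      rw [interior_Ici] at hs
      exact ((hFd s hs).differentiableAt).differentiableWithinAt
    · intro s hs
      rw [interior_Ici] at hs
      rw [(hFd s hs).deriv]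
      have h1 := key s hs
      have h2 := Real.exp_pos (lamb/2*s)
      nlinarith
  have hF0 : F 0 = 0 := by
    simp [hFdef, hPdef, hφdef, hZ0]
  have hFt : F t ≤ 0 := by
    rw [← hF0]
    exact hanti (Set.mem_Ici.mpr le_rfl) (Set.mem_Ici.mpr ht) ht
  -- comparisons of integrals
  set It : ℝ := ∫ s in (0:ℝ)..t, Real.exp (-(2*(lamb/4)*(t-s))) * ‖W s - Wbar s‖^2 with hItdef
  have hstmtc : Continuous fun s => Real.exp (-(2*(lamb/4)*(t-s))) * ‖W s - Wbar s‖^2 := by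
    exact (Real.continuous_exp.comp (by fun_prop)).mul ((hΔc.norm).pow 2)
  have hIt_eq : Real.exp (lamb/2*t) * It = ∫ s in (0:ℝ)..t, Real.exp (lamb/2*s) * ‖W s - Wbar s‖^2 := by
    rw [hItdef, ← intervalIntegral.integral_const_mul]
    refine intervalIntegral.integral_congr fun s _ => ?_
    rw [← mul_assoc, ← Real.exp_add]
    ring_nf
  have hPle : P t ≤ ‖Sig‖^2 * (Real.exp (lamb/2*t) * It) := by
    rw [hIt_eq, ← intervalIntegral.integral_const_mul]
    refine intervalIntegral.integral_mono_on ht (hfc.intervalIntegrable 0 t) ?_ ?_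
    · exact (continuous_const.mul ((Real.continuous_exp.comp
        (continuous_const.mul continuous_id)).mul ((hΔc.norm).pow 2))).intervalIntegrable 0 t
    · intro u _
      have h2 : q u ≤ ‖Sig‖^2 * ‖W u - Wbar u‖^2 := by
        show ‖Sig (W u - Wbar u)‖^2 ≤ ‖Sig‖^2 * ‖W u - Wbar u‖^2
        nlinarith [Sig.le_opNorm (W u - Wbar u), norm_nonneg (Sig (W u - Wbar u)),
          norm_nonneg (W u - Wbar u), norm_nonneg Sig]
      calc Real.exp (lamb/2*u) * q u
          ≤ Real.exp (lamb/2*u) * (‖Sig‖^2 * ‖W u - Wbar u‖^2) :=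
            mul_le_mul_of_nonneg_left h2 (Real.exp_pos _).le
        _ = ‖Sig‖^2 * (Real.exp (lamb/2*u) * ‖W u - Wbar u‖^2) := by ring
  have hφt : φ t ≤ 2*K*‖Sig‖^2 * It := by
    have h1 : Real.exp (lamb/2*t) * φ t ≤ 2*K * P t := by
      have := hFt; rw [hFdef] at this; linarith
    have h2 : Real.exp (lamb/2*t) * φ t ≤ 2*K*‖Sig‖^2 * (Real.exp (lamb/2*t) * It) := by
      calc Real.exp (lamb/2*t) * φ t ≤ 2*K * P t := h1
        _ ≤ 2*K * (‖Sig‖^2 * (Real.exp (lamb/2*t) * It)) :=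
            mul_le_mul_of_nonneg_left hPle (by linarith)
        _ = 2*K*‖Sig‖^2 * (Real.exp (lamb/2*t) * It) := by ring
    have h3 := Real.exp_pos (lamb/2*t)
    have h4 : Real.exp (lamb/2*t) * φ t ≤ Real.exp (lamb/2*t) * (2*K*‖Sig‖^2 * It) := by
      calc Real.exp (lamb/2*t) * φ t ≤ 2*K*‖Sig‖^2 * (Real.exp (lamb/2*t) * It) := h2
        _ = Real.exp (lamb/2*t) * (2*K*‖Sig‖^2 * It) := by ring
    exact le_of_mul_le_mul_left h4 h3
  have hIt_nonneg : 0 ≤ It := by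
    rw [hItdef]
    refine intervalIntegral.integral_nonneg ht fun u _ => ?_
    positivity
  -- norm of Z bound
  have hZt : ‖Z t‖ ≤ Real.sqrt (2*K) * ‖Sig‖ * Real.sqrt It := by
    have h1 : ‖Z t‖ = Real.sqrt (φ t) := by
      exact (Real.sqrt_sq (norm_nonneg (Z t))).symm
    rw [h1]
    have h2 : Real.sqrt (φ t) ≤ Real.sqrt (2*K*‖Sig‖^2 * It) := Real.sqrt_le_sqrt hφt
    refine le_trans h2 (le_of_eq ?_)
    rw [show (2*K*‖Sig‖^2 * It : ℝ) = (2*K) * (‖Sig‖^2 * It) by ring,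
      Real.sqrt_mul (by linarith), Real.sqrt_mul (sq_nonneg _),
      Real.sqrt_sq (norm_nonneg _), mul_assoc]
  have hsplit : X t x - Xbar t x = Z t + Sig (W t - Wbar t) := by
    show _ = (X t x - Xbar t x - Sig (W t - Wbar t)) + Sig (W t - Wbar t)
    abel
  have htri : ‖X t x - Xbar t x‖ ≤ ‖Z t‖ + ‖Sig‖ * ‖W t - Wbar t‖ := by
    rw [hsplit]
    exact le_trans (norm_add_le _ _) (by linarith [Sig.le_opNorm (W t - Wbar t)])
  have hfin : ‖Z t‖ + ‖Sig‖ * ‖W t - Wbar t‖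
      ≤ (‖Sig‖ + Real.sqrt (2*K) * ‖Sig‖ + 1) * (‖W t - Wbar t‖ + Real.sqrt It) := by
    have a1 : 0 ≤ Real.sqrt It := Real.sqrt_nonneg _
    have a2 : 0 ≤ ‖W t - Wbar t‖ := norm_nonneg _
    have a3 : 0 ≤ Real.sqrt (2*K) := Real.sqrt_nonneg _
    have a4 : 0 ≤ ‖Sig‖ := norm_nonneg _
    nlinarith [hZt, mul_nonneg (mul_nonneg a3 a4) a2, mul_nonneg a4 a1]
  exact le_trans htri hfin
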